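/- arXiv:1712.02648 — 3 statements merged into one kernel-verified Lean document; each statement's English description precedes it below -/
import Mathlib

section
/- Suppose 1 ≤ R < m and Σ_{k≥1} μ_k R^{−k} < ∞. Let λ be complex with |λ| > R, λ ≠ m, and μ̂(1/λ) = 1. Then the kernel of λ·Id − T on ℓ²_R is one-dimensional and equals the span of the vector u_λ := (λ^{−k} − m^{−k})_{k≥0}. -/
open scoped BigOperators ENNReal

noncomputable section

abbrev H2 : Type := lp (fun _ : ℕ => ℂ) 2

/-- the vector `v = (m^{-k} 1[k ≥ 1])_k` -/
def vSeq (m : ℝ) : ℕ → ℂ := fun k => if k = 0 then 0 else ((m : ℂ))⁻¹ ^ k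

/-- the shift `S` -/
def shiftSeq (a : ℕ → ℂ) : ℕ → ℂ := fun k => if k = 0 then 0 else a (k - 1)

/-- the terms of the series defining `χ(a)` -/
def chiSum (μ : ℕ → ℝ) (a : ℕ → ℂ) : ℕ → ℂ := fun k => (μ (k+1) : ℂ) * (a (k+1) - a k)

/-- the linear functional `χ` -/
def chiSeq (μ : ℕ → ℝ) (a : ℕ → ℂ) : ℂ := ∑' k, chiSum μ a k

/-- the operator `T = S + χ(·) v` -/
def Tseq (μ : ℕ → ℝ) (m : ℝ) (a : ℕ → ℂ) : ℕ → ℂ :=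
  fun k => shiftSeq a k + chiSeq μ a * vSeq m k

/-- membership in `ℓ²_R` -/
def memEllR (R : ℝ) (a : ℕ → ℂ) : Prop :=
  Summable fun k => R ^ (2 * k) * ‖a k‖ ^ 2

/-- from the standard `ℓ²` model to an `ℓ²_R` sequence -/
def fromModel (R : ℝ) (b : ℕ → ℂ) : ℕ → ℂ := fun k => ((R : ℂ))⁻¹ ^ k * b k

/-- from an `ℓ²_R` sequence to its standard `ℓ²` model -/
def toModel (R : ℝ) (a : ℕ → ℂ) : ℕ → ℂ := fun k => (R : ℂ) ^ k * a k

/-- the generating function `μ̂(z) = Σ_{k≥1} μ_k z^k` -/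
def genFun (μ : ℕ → ℝ) (z : ℂ) : ℂ := ∑' k, (μ (k+1) : ℂ) * z ^ (k+1)

/-- `T'` is the bounded operator on the standard `ℓ²` model corresponding to `T` on `ℓ²_R`
under the isometric isomorphism `(a_k)_k ↦ (R^k a_k)_k`. -/
def Intertwines (μ : ℕ → ℝ) (m R : ℝ) (T' : H2 →L[ℂ] H2) : Prop :=
  ∀ b : H2, ∀ k, (T' b : ℕ → ℂ) k = toModel R (Tseq μ m (fromModel R (b : ℕ → ℂ))) k

/-- For `|λ| > R`, `λ ≠ m`, `μ̂(1/λ) = 1`, the kernel of `λ·Id − T` on `ℓ²_R`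
is one-dimensional and spanned by `u_λ = (λ^{-k} − m^{-k})_k`. -/
theorem statement15
    (μ : ℕ → ℝ) (m R : ℝ)
    (hm : 1 < m) (hμnn : ∀ k, 0 ≤ μ k)
    (hμm : HasSum (fun k : ℕ => μ (k + 1) * (m⁻¹) ^ (k + 1)) 1)
    (hR1 : 1 ≤ R) (hRm : R < m)
    (hμR : Summable fun k : ℕ => μ (k + 1) * (R⁻¹) ^ (k + 1))
    (lam : ℂ) (hlam : R < ‖lam‖) (hlamm : lam ≠ (m : ℂ)) (hroot : genFun μ lam⁻¹ = 1)
    (u : ℕ → ℂ) (hu : u = fun k : ℕ => lam⁻¹ ^ k - ((m : ℂ))⁻¹ ^ k) :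
    u ≠ 0 ∧
    {a : ℕ → ℂ | memEllR R a ∧ ∀ k, lam * a k - Tseq μ m a k = 0}
      = {a : ℕ → ℂ | ∃ c : ℂ, a = fun k => c * u k} := by
  have hR0 : (0:ℝ) < R := lt_of_lt_of_le one_pos hR1
  have hm0R : (0:ℝ) < m := lt_trans one_pos hm
  have hlam0 : lam ≠ 0 := by
    intro h
    rw [h, norm_zero] at hlam; linarith
  have hm0 : (m:ℂ) ≠ 0 := by exact_mod_cast ne_of_gt hm0R
  have hml : (m:ℂ) - lam ≠ 0 := sub_ne_zero.mpr (Ne.symm hlamm)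
  have hu0 : u 0 = 0 := by simp [hu]
  -- key pointwise identity
  have key : ∀ k : ℕ, lam * u (k+1) = u k + ((m:ℂ) - lam) * ((m:ℂ))⁻¹ ^ (k+1) := by
    intro k
    have h1 : lam * lam⁻¹ ^ (k+1) = lam⁻¹ ^ k := by
      rw [pow_succ]
      field_simp
    have h2 : (m:ℂ) * ((m:ℂ))⁻¹ ^ (k+1) = ((m:ℂ))⁻¹ ^ k := by
      rw [pow_succ]
      field_simp
    simp only [hu]
    linear_combination h1 - h2
  -- the two generating-function sums
  have hgs : HasSum (fun k : ℕ => (μ (k+1) : ℂ) * ((m:ℂ))⁻¹ ^ (k+1)) 1 := by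
    have h := Complex.ofRealCLM.hasSum hμm
    simp only [Complex.ofRealCLM_apply] at h
    push_cast at h
    exact h
  have hfsum : Summable (fun k : ℕ => (μ (k+1) : ℂ) * lam⁻¹ ^ (k+1)) := by
    apply Summable.of_norm
    apply Summable.of_nonneg_of_le (fun k => norm_nonneg _) _ hμR
    intro k
    rw [norm_mul, norm_pow, Complex.norm_real, Real.norm_eq_abs,
      abs_of_nonneg (hμnn _), norm_inv]
    apply mul_le_mul_of_nonneg_left _ (hμnn _)
    apply pow_le_pow_left₀ (by positivity)
    exact inv_anti₀ hR0 (le_of_lt hlam)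
  have hfs : HasSum (fun k : ℕ => (μ (k+1) : ℂ) * lam⁻¹ ^ (k+1)) 1 :=
    (Summable.hasSum_iff hfsum).mpr hroot
  -- χ(u) = m - λ
  have hchiu : chiSeq μ u = (m:ℂ) - lam := by
    have h := (hfs.sub hgs).sub ((hfs.mul_left lam).sub (hgs.mul_left (m:ℂ)))
    have heq : (fun k : ℕ => ((μ (k+1) : ℂ) * lam⁻¹ ^ (k+1) - (μ (k+1) : ℂ) * ((m:ℂ))⁻¹ ^ (k+1))
        - (lam * ((μ (k+1) : ℂ) * lam⁻¹ ^ (k+1)) - (m:ℂ) * ((μ (k+1) : ℂ) * ((m:ℂ))⁻¹ ^ (k+1))))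
        = chiSum μ u := by
      funext k
      have h1 : lam * lam⁻¹ ^ (k+1) = lam⁻¹ ^ k := by
        rw [pow_succ]; field_simp
      have h2 : (m:ℂ) * ((m:ℂ))⁻¹ ^ (k+1) = ((m:ℂ))⁻¹ ^ k := by
        rw [pow_succ]; field_simp
      simp only [chiSum, hu]
      linear_combination (-(μ (k+1) : ℂ)) * h1 + (μ (k+1) : ℂ) * h2
    rw [heq] at h
    have := h.tsum_eq
    rw [chiSeq, this]
    ring
  -- χ is homogeneous
  have hchi_smul : ∀ c : ℂ, chiSeq μ (fun k => c * u k) = c * chiSeq μ u := by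
    intro c
    simp only [chiSeq, chiSum]
    rw [← tsum_mul_left]
    congr 1
    funext k
    ring
  -- membership of u in ℓ²_R
  have hmem_u : memEllR R u := by
    set r : ℝ := max (R / ‖lam‖) (R / m) with hr
    have hr0 : 0 ≤ r := le_trans (by positivity) (le_max_left _ _)
    have hr1 : r < 1 := by
      apply max_lt
      · rw [div_lt_one (by linarith)]; exact hlam
      · rw [div_lt_one hm0R]; exact hRm
    have hgeom : Summable (fun k : ℕ => 4 * (r^2)^k) := by
      apply Summable.mul_left
      apply summable_geometric_of_lt_one (by positivity)
      nlinarith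
    refine Summable.of_nonneg_of_le (fun k => by positivity) (fun k => ?_) hgeom
    have hnm : ‖u k‖ ≤ ‖lam‖⁻¹ ^ k + m⁻¹ ^ k := by
      rw [hu]
      refine le_trans (norm_sub_le _ _) ?_
      rw [norm_pow, norm_pow, norm_inv, norm_inv, Complex.norm_real,
        Real.norm_eq_abs, abs_of_nonneg (le_of_lt hm0R)]
    have hb : R ^ k * ‖u k‖ ≤ 2 * r ^ k := by
      calc R ^ k * ‖u k‖ ≤ R ^ k * (‖lam‖⁻¹ ^ k + m⁻¹ ^ k) := by
            apply mul_le_mul_of_nonneg_left hnm (by positivity)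
        _ = (R / ‖lam‖) ^ k + (R / m) ^ k := by
            rw [div_pow, div_pow, mul_add]
            simp only [div_eq_mul_inv, inv_pow]
        _ ≤ r ^ k + r ^ k := by
            gcongr
            · exact le_max_left _ _
            · exact le_max_right _ _
        _ = 2 * r ^ k := by ring
    calc R ^ (2*k) * ‖u k‖ ^ 2 = (R ^ k * ‖u k‖) ^ 2 := by
          rw [mul_pow, ← pow_mul, mul_comm k 2]
      _ ≤ (2 * r ^ k) ^ 2 := by
          apply pow_le_pow_left₀ (by positivity) hb
      _ = 4 * (r^2)^k := by rw [mul_pow, ← pow_mul, pow_mul]; ring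
  refine ⟨?_, ?_⟩
  · intro h
    have h1 := congrFun h 1
    simp only [hu, Pi.zero_apply, pow_one] at h1
    rw [sub_eq_zero, inv_inj] at h1
    exact hlamm h1
  · ext a
    simp only [Set.mem_setOf_eq]
    constructor
    · rintro ⟨_, heq⟩
      obtain ⟨c, hchia⟩ : ∃ c : ℂ, chiSeq μ a = c * ((m:ℂ) - lam) :=
        ⟨chiSeq μ a / ((m:ℂ) - lam), (div_mul_cancel₀ _ hml).symm⟩
      refine ⟨c, ?_⟩
      funext k
      induction k with
      | zero =>
        have h0 := heq 0
        have hT0 : Tseq μ m a 0 = 0 := by simp [Tseq, shiftSeq, vSeq]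
        rw [hT0, sub_zero] at h0
        rw [hu0, mul_zero]
        exact (mul_eq_zero.mp h0).resolve_left hlam0
      | succ k ih =>
        have hk := heq (k+1)
        simp only [Tseq, shiftSeq, vSeq, Nat.succ_ne_zero, if_false,
          Nat.add_sub_cancel, sub_eq_zero] at hk
        apply mul_left_cancel₀ hlam0
        rw [hk, ih]
        linear_combination (-c) * key k + ((m:ℂ))⁻¹ ^ (k+1) * hchia
    · rintro ⟨c, hac⟩
      subst hac
      refine ⟨?_, ?_⟩
      · simp only [memEllR]
        have : (fun k => R ^ (2*k) * ‖c * u k‖^2)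
            = fun k => ‖c‖^2 * (R ^ (2*k) * ‖u k‖^2) := by
          funext k; rw [norm_mul]; ring
        rw [this]
        exact hmem_u.mul_left _
      · intro k
        rw [sub_eq_zero]
        match k with
        | 0 =>
          simp [Tseq, shiftSeq, vSeq, hu0]
        | (k+1) =>
          simp only [Tseq, shiftSeq, vSeq, Nat.succ_ne_zero, if_false,
            Nat.add_sub_cancel, hchi_smul, hchiu]
          linear_combination c * key k
end
end

section
/- Suppose 1 ≤ R < m and Σ_{k≥1} μ_k R^{−k} < ∞. Let λ be complex with |λ| > R, λ ≠ m, and μ̂(1/λ) = 1. For h = (h_j)_{j≥0} ∈ ℓ²_R define h̃(λ) := ( Σ_{j=0}^{k} λ^{j−k−1}·h_j )_{k≥0} (the coefficient sequence of the power series h(z)/(λ−z)). Then h̃(λ) ∈ ℓ²_R, the map h ↦ χ(h̃(λ)) is a bounded linear functional on ℓ²_R, and the range of λ·Id − T on ℓ²_R equals { h ∈ ℓ²_R : χ(h̃(λ)) = 0 }. -/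
open scoped BigOperators ENNReal

noncomputable section

lemma s16_rec {K : Type*} [CommRing K] (y : K) (h : ℕ → K) (k : ℕ) :
    ∑ j ∈ Finset.range (k + 2), y ^ (k + 2 - j) * h j
      = y * ((∑ j ∈ Finset.range (k + 1), y ^ (k + 1 - j) * h j) + h (k + 1)) := by
  rw [Finset.sum_range_succ, mul_add, Finset.mul_sum]
  congr 1
  · refine Finset.sum_congr rfl fun j hj => ?_
    have h2 : k + 2 - j = (k + 1 - j) + 1 := by
      have := Finset.mem_range.mp hj; omega
    rw [h2, pow_succ]; ring
  · have h3 : k + 2 - (k + 1) = 1 := by omega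
    rw [h3, pow_one]

lemma s16_geom_sum (q : ℝ) (hq0 : 0 ≤ q) (hq1 : q < 1) (s : Finset ℕ) :
    ∑ n ∈ s, q ^ n ≤ (1 - q)⁻¹ := by
  have h := Summable.sum_le_tsum s (fun i _ => pow_nonneg hq0 i) (summable_geometric_of_lt_one hq0 hq1)
  rwa [tsum_geometric_of_lt_one hq0 hq1] at h

lemma s16_tilde_bound (R : ℝ) (hR0 : 0 < R) (lam : ℂ) (hRL : R < ‖lam‖)
    (C : ℝ) (h : ℕ → ℂ) (hC : ∀ j, ‖h j‖ ≤ C * R⁻¹ ^ j) (k : ℕ) :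
    ‖∑ j ∈ Finset.range (k + 1), lam⁻¹ ^ (k + 1 - j) * h j‖
      ≤ C * (‖lam‖ - R)⁻¹ * R⁻¹ ^ k := by
  have hL0 : (0:ℝ) < ‖lam‖ := hR0.trans hRL
  have hLR : (0:ℝ) < ‖lam‖ - R := by linarith
  have hC0 : 0 ≤ C := by
    have h0 := (norm_nonneg (h 0)).trans (hC 0)
    rw [pow_zero, mul_one] at h0; exact h0
  induction k with
  | zero =>
      rw [Finset.sum_range_one, show (0:ℕ) + 1 - 0 = 1 from rfl, pow_one, pow_zero, mul_one]
      have hC0' : ‖h 0‖ ≤ C := by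
        have h0 := hC 0; rw [pow_zero, mul_one] at h0; exact h0
      calc ‖lam⁻¹ * h 0‖ = ‖lam‖⁻¹ * ‖h 0‖ := by rw [norm_mul, norm_inv]
        _ ≤ (‖lam‖ - R)⁻¹ * C :=
            mul_le_mul (inv_anti₀ hLR (by linarith)) hC0' (norm_nonneg _) (by positivity)
        _ = C * (‖lam‖ - R)⁻¹ := by ring
  | succ k ih =>
      rw [show k + 1 + 1 = k + 2 from rfl, s16_rec]
      have hb : ‖(∑ j ∈ Finset.range (k+1), lam⁻¹ ^ (k+1-j) * h j) + h (k+1)‖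
          ≤ C * (‖lam‖ - R)⁻¹ * R⁻¹ ^ k + C * R⁻¹ ^ (k+1) :=
        (norm_add_le _ _).trans (add_le_add ih (hC (k+1)))
      calc ‖lam⁻¹ * ((∑ j ∈ Finset.range (k+1), lam⁻¹ ^ (k+1-j) * h j) + h (k+1))‖
          = ‖lam‖⁻¹ * ‖(∑ j ∈ Finset.range (k+1), lam⁻¹ ^ (k+1-j) * h j) + h (k+1)‖ := by
            rw [norm_mul, norm_inv]
        _ ≤ ‖lam‖⁻¹ * (C * (‖lam‖ - R)⁻¹ * R⁻¹ ^ k + C * R⁻¹ ^ (k+1)) := by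
            exact mul_le_mul_of_nonneg_left hb (by positivity)
        _ = C * (‖lam‖ - R)⁻¹ * R⁻¹ ^ (k+1) := by
            have h1 : R⁻¹ ^ k = R * R⁻¹ ^ (k+1) := by
              rw [pow_succ]; field_simp
            have key : ∀ L : ℝ, L ≠ 0 → L - R ≠ 0 →
                L⁻¹ * (C * (L - R)⁻¹ * R + C) = C * (L - R)⁻¹ := by
              intro L e1 e2; field_simp; ring
            calc ‖lam‖⁻¹ * (C * (‖lam‖ - R)⁻¹ * R⁻¹ ^ k + C * R⁻¹ ^ (k+1))
                = ‖lam‖⁻¹ * (C * (‖lam‖ - R)⁻¹ * R + C) * R⁻¹ ^ (k+1) := by rw [h1]; ring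
              _ = C * (‖lam‖ - R)⁻¹ * R⁻¹ ^ (k+1) := by
                  rw [key ‖lam‖ (ne_of_gt hL0) (ne_of_gt hLR)]

lemma s16_part1 (R : ℝ) (hR0 : 0 < R) (lam : ℂ) (hRL : R < ‖lam‖) (h : ℕ → ℂ)
    (hh : Summable fun k => R ^ (2 * k) * ‖h k‖ ^ 2) :
    Summable fun k =>
      R ^ (2 * k) * ‖∑ j ∈ Finset.range (k + 1), lam⁻¹ ^ (k + 1 - j) * h j‖ ^ 2 := by
  have hL0 : (0:ℝ) < ‖lam‖ := hR0.trans hRL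
  set q : ℝ := R / ‖lam‖ with hq
  have hq0 : 0 ≤ q := by positivity
  have hq1 : q < 1 := (div_lt_one hL0).mpr hRL
  set B : ℕ → ℝ := fun k => R ^ k * ‖h k‖ with hB
  have hBnn : ∀ k, 0 ≤ B k := fun k => by positivity
  have hB2 : Summable fun k => B k ^ 2 := by
    refine hh.congr fun k => ?_
    rw [hB, mul_pow, ← pow_mul, Nat.mul_comm]
  have key : ∀ k, R ^ k * ‖∑ j ∈ Finset.range (k+1), lam⁻¹ ^ (k+1-j) * h j‖
      ≤ ∑ j ∈ Finset.range (k+1), q ^ (k-j) * (‖lam‖⁻¹ * B j) := by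
    intro k
    calc R ^ k * ‖∑ j ∈ Finset.range (k+1), lam⁻¹ ^ (k+1-j) * h j‖
        ≤ R ^ k * ∑ j ∈ Finset.range (k+1), ‖lam⁻¹ ^ (k+1-j) * h j‖ :=
          mul_le_mul_of_nonneg_left (norm_sum_le _ _) (by positivity)
      _ = ∑ j ∈ Finset.range (k+1), R ^ k * ‖lam⁻¹ ^ (k+1-j) * h j‖ := Finset.mul_sum _ _ _
      _ = ∑ j ∈ Finset.range (k+1), q ^ (k-j) * (‖lam‖⁻¹ * B j) := by
          refine Finset.sum_congr rfl fun j hj => ?_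
          have hjk : j ≤ k := by
            have := Finset.mem_range.mp hj; omega
          obtain ⟨n, rfl⟩ : ∃ n, k = j + n := ⟨k - j, by omega⟩
          have e1 : j + n + 1 - j = n + 1 := by omega
          have e2 : j + n - j = n := by omega
          rw [e1, e2, norm_mul, norm_pow, norm_inv]
          have e3 : q ^ n = R ^ n * (‖lam‖⁻¹) ^ n := by
            rw [hq, div_eq_mul_inv, mul_pow]
          rw [e3, hB, pow_add, pow_succ]
          ring
  have keyD : ∀ k, (∑ j ∈ Finset.range (k+1), q ^ (k-j) * (‖lam‖⁻¹ * B j)) ^ 2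
      ≤ (1-q)⁻¹ * ‖lam‖⁻¹ ^ 2 * ∑ j ∈ Finset.range (k+1), B j ^ 2 * q ^ (k-j) := by
    intro k
    have e1 : ∀ j, Real.sqrt (q^(k-j)) * (Real.sqrt (q^(k-j)) * (‖lam‖⁻¹ * B j))
        = q^(k-j) * (‖lam‖⁻¹ * B j) := fun j => by
      rw [← mul_assoc, Real.mul_self_sqrt (pow_nonneg hq0 _)]
    have egeom : ∑ j ∈ Finset.range (k+1), q ^ (k - j) ≤ (1-q)⁻¹ := by
      have hr := Finset.sum_range_reflect (fun j => q ^ j) (k+1)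
      simp only [Nat.add_sub_cancel] at hr
      rw [hr]
      exact s16_geom_sum q hq0 hq1 _
    calc (∑ j ∈ Finset.range (k+1), q ^ (k-j) * (‖lam‖⁻¹ * B j)) ^ 2
        = (∑ j ∈ Finset.range (k+1),
            Real.sqrt (q^(k-j)) * (Real.sqrt (q^(k-j)) * (‖lam‖⁻¹ * B j))) ^ 2 := by
          congr 1; exact Finset.sum_congr rfl fun j _ => (e1 j).symm
      _ ≤ (∑ j ∈ Finset.range (k+1), Real.sqrt (q^(k-j)) ^ 2)
            * (∑ j ∈ Finset.range (k+1), (Real.sqrt (q^(k-j)) * (‖lam‖⁻¹ * B j)) ^ 2) :=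
          Finset.sum_mul_sq_le_sq_mul_sq _ _ _
      _ = (∑ j ∈ Finset.range (k+1), q^(k-j))
            * (∑ j ∈ Finset.range (k+1), ‖lam‖⁻¹^2 * (B j ^2 * q^(k-j))) := by
          congr 1
          · exact Finset.sum_congr rfl fun j _ => Real.sq_sqrt (pow_nonneg hq0 _)
          · refine Finset.sum_congr rfl fun j _ => ?_
            rw [mul_pow, Real.sq_sqrt (pow_nonneg hq0 _), mul_pow]
            ring
      _ ≤ (1-q)⁻¹ * (∑ j ∈ Finset.range (k+1), ‖lam‖⁻¹^2 * (B j^2 * q^(k-j))) := by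
          refine mul_le_mul_of_nonneg_right egeom (Finset.sum_nonneg fun j _ => ?_)
          have := hBnn j; positivity
      _ = (1-q)⁻¹ * ‖lam‖⁻¹^2 * ∑ j ∈ Finset.range (k+1), B j^2 * q^(k-j) := by
          rw [← Finset.mul_sum, ← mul_assoc]
  have hD : Summable fun k => ∑ j ∈ Finset.range (k+1), B j ^ 2 * q ^ (k - j) := by
    have h1 : Summable fun x => ‖B x ^ 2‖ :=
      hB2.congr fun x => (Real.norm_of_nonneg (sq_nonneg _)).symm
    have h2 : Summable fun x : ℕ => ‖q ^ x‖ :=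
      (summable_geometric_of_lt_one hq0 hq1).congr fun x =>
        (Real.norm_of_nonneg (pow_nonneg hq0 _)).symm
    have h3 := summable_norm_sum_mul_range_of_summable_norm h1 h2
    refine h3.congr fun n => ?_
    exact Real.norm_of_nonneg (Finset.sum_nonneg fun j _ => by
      have := hBnn j; positivity)
  refine Summable.of_nonneg_of_le (fun k => by positivity) (fun k => ?_)
    (hD.mul_left ((1-q)⁻¹ * ‖lam‖⁻¹^2))
  have e0 : R ^ (2*k) * ‖∑ j ∈ Finset.range (k+1), lam⁻¹ ^ (k+1-j) * h j‖ ^ 2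
      = (R ^ k * ‖∑ j ∈ Finset.range (k+1), lam⁻¹ ^ (k+1-j) * h j‖) ^ 2 := by
    rw [mul_pow, ← pow_mul, Nat.mul_comm]
  rw [e0]
  calc (R ^ k * ‖∑ j ∈ Finset.range (k+1), lam⁻¹ ^ (k+1-j) * h j‖) ^ 2
      ≤ (∑ j ∈ Finset.range (k+1), q ^ (k-j) * (‖lam‖⁻¹ * B j)) ^ 2 :=
        pow_le_pow_left₀ (by positivity) (key k) 2
    _ ≤ (1-q)⁻¹ * ‖lam‖⁻¹ ^ 2 * ∑ j ∈ Finset.range (k+1), B j ^ 2 * q ^ (k-j) := keyD k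

lemma s16_chi (μ : ℕ → ℝ) (hμnn : ∀ k, 0 ≤ μ k) (R : ℝ) (hR0 : 0 < R)
    (hμR : Summable fun k : ℕ => μ (k + 1) * R⁻¹ ^ (k + 1))
    (a : ℕ → ℂ) (C : ℝ) (hC : ∀ k, ‖a k‖ ≤ C * R⁻¹ ^ k) :
    Summable (chiSum μ a) ∧
      ‖chiSeq μ a‖ ≤ C * (1 + R) * ∑' k, μ (k + 1) * R⁻¹ ^ (k + 1) := by
  have hbound : ∀ k, ‖chiSum μ a k‖ ≤ C * (1 + R) * (μ (k+1) * R⁻¹ ^ (k+1)) := by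
    intro k
    have h1 : ‖chiSum μ a k‖ = μ (k+1) * ‖a (k+1) - a k‖ := by
      rw [chiSum, norm_mul, Complex.norm_real, Real.norm_of_nonneg (hμnn _)]
    rw [h1]
    have h2 : ‖a (k+1) - a k‖ ≤ C * R⁻¹^(k+1) + C * R⁻¹^k :=
      (norm_sub_le _ _).trans (add_le_add (hC _) (hC _))
    have h3 : R⁻¹ ^ k = R * R⁻¹^(k+1) := by rw [pow_succ]; field_simp
    calc μ (k+1) * ‖a (k+1) - a k‖ ≤ μ (k+1) * (C * R⁻¹^(k+1) + C * R⁻¹^k) :=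
          mul_le_mul_of_nonneg_left h2 (hμnn _)
      _ = C * (1 + R) * (μ (k+1) * R⁻¹^(k+1)) := by rw [h3]; ring
  have hs : Summable (chiSum μ a) :=
    Summable.of_norm_bounded (hμR.mul_left (C * (1+R))) hbound
  refine ⟨hs, ?_⟩
  have hns : Summable fun k => ‖chiSum μ a k‖ :=
    Summable.of_nonneg_of_le (fun k => norm_nonneg _) hbound (hμR.mul_left (C * (1+R)))
  calc ‖chiSeq μ a‖ ≤ ∑' k, ‖chiSum μ a k‖ := norm_tsum_le_tsum_norm hns
    _ ≤ ∑' k, C * (1 + R) * (μ (k+1) * R⁻¹ ^ (k+1)) :=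
        Summable.tsum_le_tsum hbound hns (hμR.mul_left (C * (1+R)))
    _ = C * (1 + R) * ∑' k, μ (k + 1) * R⁻¹ ^ (k + 1) := tsum_mul_left

lemma s16_telescope (lam : ℂ) (hlam0 : lam ≠ 0) (g : ℕ → ℂ) (k : ℕ) :
    ∑ j ∈ Finset.range (k+1), lam⁻¹ ^ (k+1-j) * (lam * g j - shiftSeq g j) = g k := by
  induction k with
  | zero =>
      rw [Finset.sum_range_one, show (0:ℕ)+1-0 = 1 from rfl, pow_one]
      simp [shiftSeq]
      field_simp
  | succ k ih =>
      rw [show k+1+1 = k+2 from rfl,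
        s16_rec lam⁻¹ (fun j => lam * g j - shiftSeq g j) k, ih]
      have : shiftSeq g (k+1) = g k := by simp [shiftSeq]
      rw [this]
      field_simp
      ring

lemma s16_w (m : ℝ) (lam : ℂ) (hm0 : (m:ℂ) ≠ 0) (hlam0 : lam ≠ 0)
    (hne : lam ≠ (m:ℂ)) (k : ℕ) :
    ∑ j ∈ Finset.range (k+1), lam⁻¹ ^ (k+1-j) * vSeq m j
      = ((m:ℂ)⁻¹ ^ k - lam⁻¹ ^ k) / (lam - (m:ℂ)) := by
  have hsub : lam - (m:ℂ) ≠ 0 := sub_ne_zero.mpr hne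
  induction k with
  | zero =>
      rw [Finset.sum_range_one]
      simp [vSeq]
  | succ k ih =>
      rw [show k+1+1 = k+2 from rfl, s16_rec lam⁻¹ (vSeq m) k, ih]
      have hv : vSeq m (k+1) = (m:ℂ)⁻¹ ^ (k+1) := by simp [vSeq]
      rw [hv]
      simp only [inv_pow]
      rw [div_add' _ _ _ hsub, ← mul_div_assoc]
      congr 1
      have p1 : lam ^ k ≠ 0 := pow_ne_zero _ hlam0
      have p2 : (m:ℂ) ^ k ≠ 0 := pow_ne_zero _ hm0
      have p3 : (m:ℂ) ^ (k+1) ≠ 0 := pow_ne_zero _ hm0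
      have p4 : lam ^ (k+1) ≠ 0 := pow_ne_zero _ hlam0
      field_simp
      ring

lemma s16_w_hasSum (μ : ℕ → ℝ) (m R : ℝ) (hm : 1 < m) (hR0 : 0 < R)
    (hμnn : ∀ k, 0 ≤ μ k)
    (hμm : HasSum (fun k : ℕ => μ (k + 1) * m⁻¹ ^ (k + 1)) 1)
    (hμR : Summable fun k : ℕ => μ (k + 1) * R⁻¹ ^ (k + 1))
    (lam : ℂ) (hlam : R < ‖lam‖) (hlamm : lam ≠ (m : ℂ)) (hroot : genFun μ lam⁻¹ = 1) :
    HasSum (chiSum μ fun k => ((m:ℂ)⁻¹ ^ k - lam⁻¹ ^ k) / (lam - (m:ℂ))) 1 := by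
  have hm0 : (m:ℂ) ≠ 0 := by
    exact_mod_cast ne_of_gt (show (0:ℝ) < m by linarith)
  have hL0 : (0:ℝ) < ‖lam‖ := hR0.trans hlam
  have hlam0 : lam ≠ 0 := by
    intro hc; rw [hc] at hL0; simp at hL0
  have hsub : lam - (m:ℂ) ≠ 0 := sub_ne_zero.mpr hlamm
  have hA : HasSum (fun k : ℕ => (μ (k+1) : ℂ) * (m:ℂ)⁻¹ ^ (k+1)) 1 := by
    have h := hμm.mapL Complex.ofRealCLM
    simp only [Complex.ofRealCLM_apply, Complex.ofReal_one] at h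
    have e : (fun k : ℕ => ((μ (k+1) * m⁻¹ ^ (k+1) : ℝ) : ℂ))
        = fun k : ℕ => (μ (k+1) : ℂ) * (m:ℂ)⁻¹ ^ (k+1) := by
      funext k; push_cast; ring
    rwa [e] at h
  have hBs : Summable (fun k : ℕ => (μ (k+1) : ℂ) * lam⁻¹ ^ (k+1)) := by
    refine Summable.of_norm_bounded hμR fun k => ?_
    rw [norm_mul, norm_pow, norm_inv, Complex.norm_real, Real.norm_of_nonneg (hμnn _)]
    refine mul_le_mul_of_nonneg_left
      (pow_le_pow_left₀ (by positivity) (inv_anti₀ hR0 hlam.le) _) (hμnn _)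
  have hB : HasSum (fun k : ℕ => (μ (k+1) : ℂ) * lam⁻¹ ^ (k+1)) 1 := by
    have h := hBs.hasSum
    rwa [show (∑' k : ℕ, (μ (k+1) : ℂ) * lam⁻¹ ^ (k+1)) = 1 from hroot] at h
  have hC : HasSum (fun k : ℕ =>
      ((1 - (m:ℂ)) * ((μ (k+1) : ℂ) * (m:ℂ)⁻¹ ^ (k+1))
        - (1 - lam) * ((μ (k+1) : ℂ) * lam⁻¹ ^ (k+1))) / (lam - (m:ℂ)))
      (((1 - (m:ℂ)) * 1 - (1 - lam) * 1) / (lam - (m:ℂ))) :=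
    ((hA.mul_left _).sub (hB.mul_left _)).div_const _
  have hval : ((1 - (m:ℂ)) * 1 - (1 - lam) * 1) / (lam - (m:ℂ)) = 1 := by
    rw [mul_one, mul_one]
    have : (1 - (m:ℂ)) - (1 - lam) = lam - (m:ℂ) := by ring
    rw [this, div_self hsub]
  rw [hval] at hC
  have hfun : (fun k : ℕ =>
      ((1 - (m:ℂ)) * ((μ (k+1) : ℂ) * (m:ℂ)⁻¹ ^ (k+1))
        - (1 - lam) * ((μ (k+1) : ℂ) * lam⁻¹ ^ (k+1))) / (lam - (m:ℂ)))
      = chiSum μ (fun k => ((m:ℂ)⁻¹ ^ k - lam⁻¹ ^ k) / (lam - (m:ℂ))) := by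
    funext k
    rw [chiSum]
    have e1 : (m:ℂ)⁻¹ ^ k = (m:ℂ) * (m:ℂ)⁻¹ ^ (k+1) := by
      rw [pow_succ, ← mul_assoc, mul_comm (m:ℂ), mul_assoc, mul_inv_cancel₀ hm0, mul_one]
    have e2 : lam⁻¹ ^ k = lam * lam⁻¹ ^ (k+1) := by
      rw [pow_succ, ← mul_assoc, mul_comm lam, mul_assoc, mul_inv_cancel₀ hlam0, mul_one]
    rw [div_sub_div_same, e1, e2, ← mul_div_assoc, div_eq_div_iff hsub hsub]
    ring
  rwa [hfun] at hC

/-- For `|λ| > R`, `λ ≠ m`, `μ̂(1/λ) = 1`: the map `h ↦ h̃(λ)` with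
`h̃(λ)_k = Σ_{j≤k} λ^{j-k-1} h_j` maps `ℓ²_R` to itself, `h ↦ χ(h̃(λ))` is a bounded linear
functional on `ℓ²_R`, and the range of `λ·Id − T` equals `{h : χ(h̃(λ)) = 0}`. -/
theorem statement16
    (μ : ℕ → ℝ) (m R : ℝ)
    (hm : 1 < m) (hμnn : ∀ k, 0 ≤ μ k)
    (hμm : HasSum (fun k : ℕ => μ (k + 1) * (m⁻¹) ^ (k + 1)) 1)
    (hR1 : 1 ≤ R) (hRm : R < m)
    (hμR : Summable fun k : ℕ => μ (k + 1) * (R⁻¹) ^ (k + 1))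
    (lam : ℂ) (hlam : R < ‖lam‖) (hlamm : lam ≠ (m : ℂ)) (hroot : genFun μ lam⁻¹ = 1)
    (tilde : (ℕ → ℂ) → ℕ → ℂ)
    (htilde : ∀ (h : ℕ → ℂ) (k : ℕ),
      tilde h k = ∑ j ∈ Finset.range (k + 1), lam⁻¹ ^ (k + 1 - j) * h j) :
    (∀ h : ℕ → ℂ, memEllR R h → memEllR R (tilde h)) ∧
    (∃ φ : H2 →L[ℂ] ℂ, ∀ b : H2,
      HasSum (chiSum μ (tilde (fromModel R (b : ℕ → ℂ)))) (φ b)) ∧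
    (∀ T' : H2 →L[ℂ] H2, Intertwines μ m R T' →
      Set.range (fun x : H2 => lam • x - T' x)
        = {b : H2 | chiSeq μ (tilde (fromModel R (b : ℕ → ℂ))) = 0}) := by
  have hR0 : (0:ℝ) < R := lt_of_lt_of_le one_pos hR1
  have hRC : (R:ℂ) ≠ 0 := by exact_mod_cast ne_of_gt hR0
  have hL0 : (0:ℝ) < ‖lam‖ := hR0.trans hlam
  have hLR : (0:ℝ) < ‖lam‖ - R := by linarith
  have hlam0 : lam ≠ 0 := by
    intro hc; rw [hc] at hL0; simp at hL0
  have hm0 : (m:ℂ) ≠ 0 := by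
    exact_mod_cast ne_of_gt (show (0:ℝ) < m by linarith)
  -- pointwise bound for `fromModel` of lp elements
  have hfmb : ∀ b : H2, ∀ j, ‖fromModel R (b : ℕ → ℂ) j‖ ≤ ‖b‖ * R⁻¹ ^ j := by
    intro b j
    have e : ‖fromModel R (b : ℕ → ℂ) j‖ = R⁻¹ ^ j * ‖(b : ℕ → ℂ) j‖ := by
      simp only [fromModel]
      rw [norm_mul, norm_pow, norm_inv, Complex.norm_real, Real.norm_of_nonneg hR0.le]
    rw [e, mul_comm (‖b‖)]
    exact mul_le_mul_of_nonneg_left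
      (lp.norm_apply_le_norm (by norm_num) b j) (by positivity)
  -- pointwise bound for tilde of such
  have htb : ∀ b : H2, ∀ k, ‖tilde (fromModel R (b : ℕ → ℂ)) k‖
      ≤ ‖b‖ * (‖lam‖ - R)⁻¹ * R⁻¹ ^ k := by
    intro b k
    rw [htilde]
    exact s16_tilde_bound R hR0 lam hlam ‖b‖ _ (hfmb b) k
  have hchib : ∀ b : H2, Summable (chiSum μ (tilde (fromModel R (b : ℕ → ℂ)))) ∧
      ‖chiSeq μ (tilde (fromModel R (b : ℕ → ℂ)))‖
        ≤ (‖b‖ * (‖lam‖ - R)⁻¹) * (1 + R) * ∑' k, μ (k + 1) * R⁻¹ ^ (k + 1) :=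
    fun b => s16_chi μ hμnn R hR0 hμR _ _ (htb b)
  refine ⟨?_, ?_, ?_⟩
  · -- Part 1
    intro h hh
    have hs : Summable fun k =>
        R ^ (2*k) * ‖∑ j ∈ Finset.range (k+1), lam⁻¹ ^ (k+1-j) * h j‖ ^ 2 :=
      s16_part1 R hR0 lam hlam h hh
    exact hs.congr fun k => by rw [htilde h k]
  · -- Part 2
    have hadd : ∀ b c : H2,
        chiSeq μ (tilde (fromModel R ((b + c : H2) : ℕ → ℂ)))
          = chiSeq μ (tilde (fromModel R (b : ℕ → ℂ)))
            + chiSeq μ (tilde (fromModel R (c : ℕ → ℂ))) := by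
      intro b c
      have hpt : ∀ k, tilde (fromModel R ((b + c : H2) : ℕ → ℂ)) k
          = tilde (fromModel R (b : ℕ → ℂ)) k + tilde (fromModel R (c : ℕ → ℂ)) k := by
        intro k
        rw [htilde, htilde, htilde, ← Finset.sum_add_distrib]
        refine Finset.sum_congr rfl fun j _ => ?_
        have e : fromModel R ((b + c : H2) : ℕ → ℂ) j
            = fromModel R (b : ℕ → ℂ) j + fromModel R (c : ℕ → ℂ) j := by
          simp only [fromModel, lp.coeFn_add, Pi.add_apply]; ring
        rw [e]; ring
      have hcs : ∀ k, chiSum μ (tilde (fromModel R ((b + c : H2) : ℕ → ℂ))) k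
          = chiSum μ (tilde (fromModel R (b : ℕ → ℂ))) k
            + chiSum μ (tilde (fromModel R (c : ℕ → ℂ))) k := by
        intro k; simp only [chiSum, hpt]; ring
      rw [chiSeq, tsum_congr hcs, Summable.tsum_add (hchib b).1 (hchib c).1]
      rfl
    have hsmul : ∀ (c : ℂ) (b : H2),
        chiSeq μ (tilde (fromModel R ((c • b : H2) : ℕ → ℂ)))
          = c * chiSeq μ (tilde (fromModel R (b : ℕ → ℂ))) := by
      intro c b
      have hpt : ∀ k, tilde (fromModel R ((c • b : H2) : ℕ → ℂ)) k
          = c * tilde (fromModel R (b : ℕ → ℂ)) k := by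
        intro k
        rw [htilde, htilde, Finset.mul_sum]
        refine Finset.sum_congr rfl fun j _ => ?_
        have e : fromModel R ((c • b : H2) : ℕ → ℂ) j
            = c * fromModel R (b : ℕ → ℂ) j := by
          simp only [fromModel, lp.coeFn_smul, Pi.smul_apply, smul_eq_mul]; ring
        rw [e]; ring
      have hcs : ∀ k, chiSum μ (tilde (fromModel R ((c • b : H2) : ℕ → ℂ))) k
          = c * chiSum μ (tilde (fromModel R (b : ℕ → ℂ))) k := by
        intro k; simp only [chiSum, hpt]; ring
      rw [chiSeq, tsum_congr hcs, tsum_mul_left]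
      rfl
    set K : ℝ := (‖lam‖ - R)⁻¹ * (1 + R) * ∑' k, μ (k + 1) * R⁻¹ ^ (k + 1) with hK
    let φlin : H2 →ₗ[ℂ] ℂ :=
      { toFun := fun b => chiSeq μ (tilde (fromModel R (b : ℕ → ℂ)))
        map_add' := hadd
        map_smul' := fun c b => by simpa using hsmul c b }
    have hbd : ∀ b : H2, ‖φlin b‖ ≤ K * ‖b‖ := by
      intro b
      have := (hchib b).2
      calc ‖φlin b‖ ≤ (‖b‖ * (‖lam‖ - R)⁻¹) * (1 + R) * ∑' k, μ (k + 1) * R⁻¹ ^ (k + 1) :=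
            (hchib b).2
        _ = K * ‖b‖ := by rw [hK]; ring
    refine ⟨LinearMap.mkContinuous φlin K hbd, fun b => ?_⟩
    have h1 : (LinearMap.mkContinuous φlin K hbd) b
        = chiSeq μ (tilde (fromModel R (b : ℕ → ℂ))) := rfl
    rw [h1]
    exact (hchib b).1.hasSum
  · -- Part 3
    intro T' hT
    have hwHS := s16_w_hasSum μ m R hm hR0 hμnn hμm hμR lam hlam hlamm hroot
    ext b
    simp only [Set.mem_range, Set.mem_setOf_eq]
    constructor
    · rintro ⟨x, rfl⟩
      have hgsum : Summable (chiSum μ (fromModel R (x : ℕ → ℂ))) :=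
        (s16_chi μ hμnn R hR0 hμR _ _ (hfmb x)).1
      have hfm : ∀ k, fromModel R ((lam • x - T' x : H2) : ℕ → ℂ) k
          = lam * fromModel R (x : ℕ → ℂ) k
            - (shiftSeq (fromModel R (x : ℕ → ℂ)) k
                + chiSeq μ (fromModel R (x : ℕ → ℂ)) * vSeq m k) := by
        intro k
        have hc : ((lam • x - T' x : H2) : ℕ → ℂ) k = lam * (x : ℕ → ℂ) k - (T' x : ℕ → ℂ) k := by
          simp [lp.coeFn_sub, lp.coeFn_smul, Pi.smul_apply, smul_eq_mul]
          rfl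
        have hone : ((R:ℂ))⁻¹ ^ k * (R:ℂ) ^ k = 1 := by
          rw [← mul_pow, inv_mul_cancel₀ hRC, one_pow]
        have h1 : fromModel R ((lam • x - T' x : H2) : ℕ → ℂ) k
            = ((R:ℂ))⁻¹ ^ k * (((lam • x - T' x : H2) : ℕ → ℂ) k) := rfl
        have h2 : toModel R (Tseq μ m (fromModel R (x : ℕ → ℂ))) k
            = (R:ℂ) ^ k * (shiftSeq (fromModel R (x : ℕ → ℂ)) k
                + chiSeq μ (fromModel R (x : ℕ → ℂ)) * vSeq m k) := rfl
        have h3 : fromModel R (x : ℕ → ℂ) k = ((R:ℂ))⁻¹ ^ k * (x : ℕ → ℂ) k := rfl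
        rw [h1, hc, hT x k, h2, h3]
        linear_combination (-(shiftSeq (fromModel R (x : ℕ → ℂ)) k
          + chiSeq μ (fromModel R (x : ℕ → ℂ)) * vSeq m k)) * hone
      have hsplit : ∀ k, tilde (fromModel R ((lam • x - T' x : H2) : ℕ → ℂ)) k
          = fromModel R (x : ℕ → ℂ) k
            - chiSeq μ (fromModel R (x : ℕ → ℂ))
              * (((m:ℂ)⁻¹ ^ k - lam⁻¹ ^ k) / (lam - (m:ℂ))) := by
        intro k
        rw [htilde]
        have e : ∀ j ∈ Finset.range (k+1),
            lam⁻¹ ^ (k+1-j) * fromModel R ((lam • x - T' x : H2) : ℕ → ℂ) j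
            = lam⁻¹ ^ (k+1-j) * (lam * fromModel R (x : ℕ → ℂ) j
                - shiftSeq (fromModel R (x : ℕ → ℂ)) j)
              - chiSeq μ (fromModel R (x : ℕ → ℂ)) * (lam⁻¹ ^ (k+1-j) * vSeq m j) := by
          intro j _; rw [hfm j]; ring
        rw [Finset.sum_congr rfl e, Finset.sum_sub_distrib, ← Finset.mul_sum,
          s16_telescope lam hlam0 _ k, s16_w m lam hm0 hlam0 hlamm k]
      have hps : ∀ k, chiSum μ (tilde (fromModel R ((lam • x - T' x : H2) : ℕ → ℂ))) k
          = chiSum μ (fromModel R (x : ℕ → ℂ)) k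
            - chiSeq μ (fromModel R (x : ℕ → ℂ))
              * chiSum μ (fun k => ((m:ℂ)⁻¹ ^ k - lam⁻¹ ^ k) / (lam - (m:ℂ))) k := by
        intro k; simp only [chiSum, hsplit]; ring
      rw [chiSeq, tsum_congr hps,
        Summable.tsum_sub hgsum (hwHS.summable.mul_left (chiSeq μ (fromModel R (x : ℕ → ℂ)))),
        tsum_mul_left, hwHS.tsum_eq, mul_one]
      exact sub_self _
    · intro hb
      have hhsum : Summable fun k => R ^ (2*k) * ‖fromModel R (b : ℕ → ℂ) k‖ ^ 2 := by
        have hb2 : Summable fun k => ‖(b : ℕ → ℂ) k‖ ^ (2:ℕ) := by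
          have hs := ((lp.memℓp b).summable (by norm_num : 0 < (2:ℝ≥0∞).toReal))
          refine hs.congr fun k => ?_
          rw [show ((2:ℝ≥0∞)).toReal = ((2:ℕ):ℝ) by simp, Real.rpow_natCast]
        refine hb2.congr fun k => ?_
        simp only [fromModel]
        rw [norm_mul, norm_pow, norm_inv, Complex.norm_real, Real.norm_of_nonneg hR0.le,
          mul_pow, ← mul_assoc,
          show R ^ (2*k) * (R⁻¹ ^ k) ^ 2 = 1 by
            rw [← pow_mul R⁻¹ k 2, Nat.mul_comm k 2, ← mul_pow,
              mul_inv_cancel₀ (ne_of_gt hR0), one_pow],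
          one_mul]
      have hmem : Memℓp (toModel R (tilde (fromModel R (b : ℕ → ℂ)))) 2 := by
        apply memℓp_gen
        have hs := s16_part1 R hR0 lam hlam _ hhsum
        refine hs.congr fun k => ?_
        rw [show ((2:ℝ≥0∞)).toReal = ((2:ℕ):ℝ) by simp, Real.rpow_natCast]
        simp only [toModel]
        rw [htilde, norm_mul, norm_pow, Complex.norm_real, Real.norm_of_nonneg hR0.le,
          mul_pow, ← pow_mul, Nat.mul_comm k 2]
      refine ⟨⟨toModel R (tilde (fromModel R (b : ℕ → ℂ))), hmem⟩, ?_⟩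
      set x' : H2 := ⟨toModel R (tilde (fromModel R (b : ℕ → ℂ))), hmem⟩ with hx'
      have hx'coe : (x' : ℕ → ℂ) = toModel R (tilde (fromModel R (b : ℕ → ℂ))) := rfl
      have hcanc : fromModel R ((x' : ℕ → ℂ)) = tilde (fromModel R (b : ℕ → ℂ)) := by
        funext k
        rw [hx'coe]
        simp only [fromModel, toModel]
        rw [← mul_assoc, ← mul_pow, inv_mul_cancel₀ hRC, one_pow, one_mul]
      have hrec : ∀ k, lam * tilde (fromModel R (b : ℕ → ℂ)) k
          - shiftSeq (tilde (fromModel R (b : ℕ → ℂ))) k = fromModel R (b : ℕ → ℂ) k := by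
        intro k
        cases k with
        | zero =>
            have hsh : shiftSeq (tilde (fromModel R (b : ℕ → ℂ))) 0 = 0 := by simp [shiftSeq]
            rw [hsh, sub_zero, htilde, Finset.sum_range_one,
              show (0:ℕ)+1-0 = 1 from rfl, pow_one, ← mul_assoc,
              mul_inv_cancel₀ hlam0, one_mul]
        | succ k =>
            have hsh : shiftSeq (tilde (fromModel R (b : ℕ → ℂ))) (k+1)
                = tilde (fromModel R (b : ℕ → ℂ)) k := by simp [shiftSeq]
            rw [hsh, htilde _ (k+1), show k+1+1 = k+2 from rfl,
              s16_rec lam⁻¹ (fromModel R (b : ℕ → ℂ)) k, ← htilde, ← mul_assoc,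
              mul_inv_cancel₀ hlam0, one_mul]
            ring
      apply lp.ext
      funext k
      have e1 : ((lam • x' - T' x' : H2) : ℕ → ℂ) k
          = lam * toModel R (tilde (fromModel R (b : ℕ → ℂ))) k - (T' x' : ℕ → ℂ) k := by
        simp only [lp.coeFn_sub, Pi.sub_apply, lp.coeFn_smul, Pi.smul_apply, smul_eq_mul,
          hx'coe]
      have e2 : (T' x' : ℕ → ℂ) k
          = (R:ℂ) ^ k * (shiftSeq (tilde (fromModel R (b : ℕ → ℂ))) k
              + chiSeq μ (tilde (fromModel R (b : ℕ → ℂ))) * vSeq m k) := by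
        rw [hT x' k]
        simp only [toModel]
        rw [hcanc]
        rfl
      calc ((lam • x' - T' x' : H2) : ℕ → ℂ) k
          = lam * toModel R (tilde (fromModel R (b : ℕ → ℂ))) k
            - (R:ℂ) ^ k * (shiftSeq (tilde (fromModel R (b : ℕ → ℂ))) k
                + chiSeq μ (tilde (fromModel R (b : ℕ → ℂ))) * vSeq m k) := by
            rw [e1, e2]
        _ = (R:ℂ) ^ k * (lam * tilde (fromModel R (b : ℕ → ℂ)) k
              - shiftSeq (tilde (fromModel R (b : ℕ → ℂ))) k) := by
            rw [hb]
            simp only [toModel]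
            ring
        _ = (R:ℂ) ^ k * fromModel R (b : ℕ → ℂ) k := by rw [hrec k]
        _ = (b : ℕ → ℂ) k := by
            simp only [fromModel]
            rw [← mul_assoc, ← mul_pow, mul_inv_cancel₀ hRC, one_pow, one_mul]
end
end

section
/- Suppose 1 ≤ R < m and Σ_{k≥1} μ_k R^{−k} < ∞. Let λ be complex with |λ| > R, λ ≠ m, μ̂(1/λ) = 1, and additionally μ̂'(1/λ) ≠ 0, where μ̂'(w) := Σ_{k≥1} k·μ_k·w^{k−1}. Then the eigenvector u_λ := (λ^{−k} − m^{−k})_{k≥0} does not belong to the range of λ·Id − T; consequently the kernel and the range of λ·Id − T on ℓ²_R intersect only in {0}. -/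
open scoped BigOperators ENNReal

noncomputable section

/-- the derivative `μ̂'(w) = Σ_{k≥1} k μ_k w^{k-1}` -/
def dgenFun (μ : ℕ → ℝ) (w : ℂ) : ℂ := ∑' k, ((k + 1 : ℕ) : ℂ) * (μ (k + 1) : ℂ) * w ^ k

/-- scaling of the operator `T` -/
lemma Tseq_smul (μ : ℕ → ℝ) (m : ℝ) (s : ℂ) (a : ℕ → ℂ) (k : ℕ) :
    Tseq μ m (fun j => s * a j) k = s * Tseq μ m a k := by
  have hchi : chiSeq μ (fun j => s * a j) = s * chiSeq μ a := by
    rw [chiSeq, chiSeq, ← tsum_mul_left]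
    exact tsum_congr fun k => by simp only [chiSum]; ring
  cases k <;> simp [Tseq, shiftSeq, vSeq, hchi] <;> ring

/-- summability of `Σ (k+1) μ_{k+1} x^{-k}` for `‖x‖ > R` -/
lemma aux_summable (μ : ℕ → ℝ) (hμnn : ∀ k, 0 ≤ μ k) {R : ℝ} (hR : 0 < R)
    (hμR : Summable fun k : ℕ => μ (k + 1) * (R⁻¹) ^ (k + 1)) {x : ℂ} (hx : R < ‖x‖) :
    Summable fun k : ℕ => ((k : ℂ) + 1) * (μ (k + 1) : ℂ) * x⁻¹ ^ k := by
  set M := ∑' k : ℕ, μ (k + 1) * (R⁻¹) ^ (k + 1) with hM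
  have hMk : ∀ k : ℕ, μ (k + 1) * (R⁻¹) ^ (k + 1) ≤ M := fun k =>
    Summable.le_tsum hμR k fun j _ => mul_nonneg (hμnn _) (pow_nonneg (inv_nonneg.2 hR.le) _)
  have hμle : ∀ k : ℕ, μ (k + 1) ≤ M * R ^ (k + 1) := by
    intro k
    have hRp : (0 : ℝ) < R ^ (k + 1) := pow_pos hR _
    have h := mul_le_mul_of_nonneg_right (hMk k) hRp.le
    calc μ (k + 1) = μ (k + 1) * (R⁻¹) ^ (k + 1) * R ^ (k + 1) := by
          rw [inv_pow, mul_assoc, inv_mul_cancel₀ (pow_ne_zero _ hR.ne'), mul_one]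
      _ ≤ M * R ^ (k + 1) := h
  have hx0 : 0 < ‖x‖ := hR.trans hx
  set q := R * ‖x‖⁻¹ with hq
  have hq0 : 0 ≤ q := mul_nonneg hR.le (inv_nonneg.2 hx0.le)
  have hq1 : q < 1 := by
    rw [hq, ← div_eq_mul_inv]
    exact (div_lt_one hx0).2 hx
  have hsum : Summable fun k : ℕ => ((k : ℝ) + 1) * q ^ k := by
    have h1 := summable_pow_mul_geometric_of_norm_lt_one (R := ℝ) 1
      (r := q) (by rwa [Real.norm_of_nonneg hq0])
    have h0 := summable_geometric_of_lt_one hq0 hq1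
    exact (h1.add h0).congr fun k => by push_cast; ring
  refine Summable.of_norm_bounded (g := fun k => (M * R) * (((k : ℝ) + 1) * q ^ k))
    (hsum.mul_left _) ?_
  intro k
  have hcast : ((k : ℂ) + 1) = ((k + 1 : ℕ) : ℂ) := by push_cast; ring
  rw [norm_mul, norm_mul, norm_pow, norm_inv, hcast, Complex.norm_natCast,
    Complex.norm_real, Real.norm_of_nonneg (hμnn _)]
  calc ((k + 1 : ℕ) : ℝ) * μ (k + 1) * ‖x‖⁻¹ ^ k
      ≤ ((k + 1 : ℕ) : ℝ) * (M * R ^ (k + 1)) * ‖x‖⁻¹ ^ k := by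
        have : (0:ℝ) ≤ ((k + 1 : ℕ) : ℝ) := by positivity
        have h2 : (0:ℝ) ≤ ‖x‖⁻¹ ^ k := by positivity
        exact mul_le_mul_of_nonneg_right (mul_le_mul_of_nonneg_left (hμle k) this) h2
    _ = M * R * (((k : ℝ) + 1) * q ^ k) := by
        rw [hq, mul_pow, pow_succ]
        push_cast
        ring

/-- summability of `Σ μ_{k+1} x^{-(k+1)}` for `‖x‖ > R` -/
lemma aux_summable' (μ : ℕ → ℝ) (hμnn : ∀ k, 0 ≤ μ k) {R : ℝ} (hR : 0 < R)
    (hμR : Summable fun k : ℕ => μ (k + 1) * (R⁻¹) ^ (k + 1)) {x : ℂ} (hx : R ≤ ‖x‖) :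
    Summable fun k : ℕ => (μ (k + 1) : ℂ) * x⁻¹ ^ (k + 1) := by
  have hx0 : 0 < ‖x‖ := lt_of_lt_of_le hR hx
  refine Summable.of_norm_bounded hμR ?_
  intro k
  rw [norm_mul, norm_pow, norm_inv, Complex.norm_real, Real.norm_of_nonneg (hμnn _)]
  have h1 : ‖x‖⁻¹ ≤ R⁻¹ := inv_anti₀ hR hx
  have h2 : ‖x‖⁻¹ ^ (k+1) ≤ (R⁻¹) ^ (k+1) :=
    pow_le_pow_left₀ (inv_nonneg.2 hx0.le) h1 _
  exact mul_le_mul_of_nonneg_left h2 (hμnn _)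

/-- For `|λ| > R`, `λ ≠ m`, `μ̂(1/λ) = 1`, `μ̂'(1/λ) ≠ 0`: the eigenvector
`u_λ = (λ^{-k} − m^{-k})_k` is not in the range of `λ·Id − T` on `ℓ²_R`; consequently the
kernel and the range of `λ·Id − T` intersect only in `{0}`. -/
theorem statement17
    (μ : ℕ → ℝ) (m R : ℝ)
    (hm : 1 < m) (hμnn : ∀ k, 0 ≤ μ k)
    (hμm : HasSum (fun k : ℕ => μ (k + 1) * (m⁻¹) ^ (k + 1)) 1)
    (hR1 : 1 ≤ R) (hRm : R < m)
    (hμR : Summable fun k : ℕ => μ (k + 1) * (R⁻¹) ^ (k + 1))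
    (lam : ℂ) (hlam : R < ‖lam‖) (hlamm : lam ≠ (m : ℂ))
    (hroot : genFun μ lam⁻¹ = 1) (hder : dgenFun μ lam⁻¹ ≠ 0)
    (u : ℕ → ℂ) (hu : u = fun k : ℕ => lam⁻¹ ^ k - ((m : ℂ))⁻¹ ^ k) :
    (¬ ∃ a : ℕ → ℂ, memEllR R a ∧ ∀ k, lam * a k - Tseq μ m a k = u k) ∧
    (∀ g : ℕ → ℂ, memEllR R g →
      (∃ a : ℕ → ℂ, memEllR R a ∧ ∀ k, lam * a k - Tseq μ m a k = g k) →
      (∀ k, lam * g k - Tseq μ m g k = 0) → g = 0) := by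
  subst hu
  have hR0 : (0:ℝ) < R := lt_of_lt_of_le one_pos hR1
  have hm0 : (m : ℂ) ≠ 0 := by
    simpa using (show (m:ℝ) ≠ 0 by positivity)
  have hlamnorm : (1:ℝ) < ‖lam‖ := lt_of_le_of_lt hR1 hlam
  have hlam0 : lam ≠ 0 := by
    intro h; rw [h] at hlamnorm; simp at hlamnorm; linarith
  have hlam1 : lam ≠ 1 := by
    intro h; rw [h] at hlamnorm; simp at hlamnorm
  have hlm : lam - (m : ℂ) ≠ 0 := sub_ne_zero.2 hlamm
  have hinvlam : lam * lam⁻¹ = 1 := mul_inv_cancel₀ hlam0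
  have hinvm : (m : ℂ) * (m : ℂ)⁻¹ = 1 := mul_inv_cancel₀ hm0
  -- the three HasSum facts
  have h1 : HasSum (fun k : ℕ => (μ (k + 1) : ℂ) * lam⁻¹ ^ (k + 1)) 1 := by
    rw [(aux_summable' μ hμnn hR0 hμR hlam.le).hasSum_iff]
    exact hroot
  have h1m : HasSum (fun k : ℕ => (μ (k + 1) : ℂ) * ((m:ℂ))⁻¹ ^ (k + 1)) 1 := by
    have h := Complex.hasSum_ofReal.2 hμm
    have hfe : (fun k : ℕ => ((μ (k + 1) * (m⁻¹) ^ (k + 1) : ℝ) : ℂ))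
        = fun k : ℕ => (μ (k + 1) : ℂ) * ((m:ℂ))⁻¹ ^ (k + 1) := by
      funext k; push_cast; ring
    rw [hfe] at h; simpa using h
  have hDsum := aux_summable μ hμnn hR0 hμR hlam
  have hD : HasSum (fun k : ℕ => ((k : ℂ) + 1) * (μ (k + 1) : ℂ) * lam⁻¹ ^ k)
      (dgenFun μ lam⁻¹) := by
    have h := hDsum.hasSum
    have : dgenFun μ lam⁻¹ = ∑' k : ℕ, ((k : ℂ) + 1) * (μ (k + 1) : ℂ) * lam⁻¹ ^ k := by
      rw [dgenFun]
      exact tsum_congr fun k => by push_cast; ring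
    rwa [← this] at h
  set D := dgenFun μ lam⁻¹ with hDdef
  -- Part 1 : u is not in the range
  have part1 : ¬ ∃ a : ℕ → ℂ, memEllR R a ∧
      ∀ k, lam * a k - Tseq μ m a k = (fun k : ℕ => lam⁻¹ ^ k - ((m : ℂ))⁻¹ ^ k) k := by
    rintro ⟨a, -, heq⟩
    simp only [] at heq
    set χ := chiSeq μ a with hχ
    set c := (χ - 1) / (lam - (m:ℂ)) with hcdef
    have hc : c * (lam - (m:ℂ)) = χ - 1 := div_mul_cancel₀ _ hlm
    have hT : ∀ k, Tseq μ m a (k+1) = a k + χ * ((m:ℂ))⁻¹ ^ (k+1) := by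
      intro k; simp [Tseq, shiftSeq, vSeq, ← hχ]
    have hT0 : Tseq μ m a 0 = 0 := by simp [Tseq, shiftSeq, vSeq]
    have ha0 : a 0 = 0 := by
      have h := heq 0
      rw [hT0, sub_zero] at h
      simp only [pow_zero, sub_self] at h
      exact (mul_eq_zero.mp h).resolve_left hlam0
    have hform : ∀ k, a k = (k:ℂ) * lam⁻¹ ^ (k+1) + c * (((m:ℂ))⁻¹ ^ k - lam⁻¹ ^ k) := by
      intro k
      induction k with
      | zero => simp [ha0]
      | succ k ih =>
        have h := heq (k+1)
        rw [hT k] at h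
        have hrec : lam * a (k+1)
            = a k + χ * ((m:ℂ))⁻¹ ^ (k+1) + (lam⁻¹ ^ (k+1) - ((m:ℂ))⁻¹ ^ (k+1)) := by
          linear_combination h
        apply mul_left_cancel₀ hlam0
        rw [hrec, ih]
        push_cast
        rw [pow_succ lam⁻¹ (k+1), pow_succ lam⁻¹ k, pow_succ ((m:ℂ))⁻¹ k]
        linear_combination (-(((k:ℂ)+1) * lam⁻¹ ^ k * lam⁻¹) + c * lam⁻¹ ^ k) * hinvlam
          - (c * ((m:ℂ))⁻¹ ^ k) * hinvm - (((m:ℂ))⁻¹ ^ k * ((m:ℂ))⁻¹) * hc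
    have hdec : ∀ k, chiSum μ a k
        = (lam⁻¹ ^ 2 - lam⁻¹) * (((k:ℂ) + 1) * (μ (k+1) : ℂ) * lam⁻¹ ^ k)
          + ((1 + c * (lam - 1)) * ((μ (k+1) : ℂ) * lam⁻¹ ^ (k+1))
          + (c * (1 - (m:ℂ))) * ((μ (k+1) : ℂ) * ((m:ℂ))⁻¹ ^ (k+1))) := by
      intro k
      simp only [chiSum]
      rw [hform (k+1), hform k]
      push_cast
      rw [pow_succ lam⁻¹ (k+1), pow_succ lam⁻¹ k, pow_succ ((m:ℂ))⁻¹ k]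
      linear_combination (-(c * (μ (k+1) : ℂ) * lam⁻¹ ^ k)) * hinvlam
        + (c * (μ (k+1) : ℂ) * ((m:ℂ))⁻¹ ^ k) * hinvm
    have key : HasSum (chiSum μ a)
        ((lam⁻¹ ^ 2 - lam⁻¹) * D + ((1 + c * (lam - 1)) * 1 + (c * (1 - (m:ℂ))) * 1)) := by
      have H := (hD.mul_left (lam⁻¹ ^ 2 - lam⁻¹)).add
        ((h1.mul_left (1 + c * (lam - 1))).add (h1m.mul_left (c * (1 - (m:ℂ)))))
      rwa [show chiSum μ a = _ from funext hdec]
    have hχval : χ = (lam⁻¹ ^ 2 - lam⁻¹) * D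
        + ((1 + c * (lam - 1)) * 1 + (c * (1 - (m:ℂ))) * 1) := by
      have ht := key.tsum_eq
      rw [hχ, chiSeq, ht]
    have hzero : (lam⁻¹ ^ 2 - lam⁻¹) * D = 0 := by
      linear_combination -hχval - hc
    have hfac : lam⁻¹ ^ 2 - lam⁻¹ ≠ 0 := by
      intro h
      have h2 : lam⁻¹ * (lam⁻¹ - 1) = 0 := by linear_combination h
      rcases mul_eq_zero.mp h2 with h3 | h3
      · exact inv_ne_zero hlam0 h3
      · have h4 : lam⁻¹ = 1 := by linear_combination h3
        exact hlam1 (by rw [← inv_inv lam, h4, inv_one])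
    exact hder ((mul_eq_zero.mp hzero).resolve_left hfac)
  refine ⟨part1, ?_⟩
  -- Part 2 : kernel ∩ range = 0
  intro g hg hrange hker
  set χg := chiSeq μ g with hχg
  set cg := χg / (lam - (m:ℂ)) with hcgdef
  have hcg : cg * (lam - (m:ℂ)) = χg := div_mul_cancel₀ _ hlm
  have hT : ∀ k, Tseq μ m g (k+1) = g k + χg * ((m:ℂ))⁻¹ ^ (k+1) := by
    intro k; simp [Tseq, shiftSeq, vSeq, ← hχg]
  have hT0 : Tseq μ m g 0 = 0 := by simp [Tseq, shiftSeq, vSeq]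
  have hg0 : g 0 = 0 := by
    have h := hker 0
    rw [hT0, sub_zero] at h
    exact (mul_eq_zero.mp h).resolve_left hlam0
  have hgform : ∀ k, g k = cg * (((m:ℂ))⁻¹ ^ k - lam⁻¹ ^ k) := by
    intro k
    induction k with
    | zero => simp [hg0]
    | succ k ih =>
      have h := hker (k+1)
      rw [hT k] at h
      have hrec : lam * g (k+1) = g k + χg * ((m:ℂ))⁻¹ ^ (k+1) := by
        linear_combination h
      apply mul_left_cancel₀ hlam0
      rw [hrec, ih]
      rw [pow_succ lam⁻¹ k, pow_succ ((m:ℂ))⁻¹ k]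
      linear_combination (cg * lam⁻¹ ^ k) * hinvlam - (cg * ((m:ℂ))⁻¹ ^ k) * hinvm
        - (((m:ℂ))⁻¹ ^ k * ((m:ℂ))⁻¹) * hcg
  by_cases hcg0 : cg = 0
  · funext k
    rw [hgform k, hcg0]
    simp
  · exfalso
    obtain ⟨b, hb2, hbeq⟩ := hrange
    set s := -cg⁻¹ with hs
    refine part1 ⟨fun j => s * b j, ?_, ?_⟩
    · unfold memEllR at hb2 ⊢
      refine (hb2.mul_left (‖s‖ ^ 2)).congr fun k => ?_
      rw [norm_mul, mul_pow]
      ring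
    · intro k
      rw [Tseq_smul μ m s b k]
      have h := hbeq k
      have hsg : s * g k = lam⁻¹ ^ k - ((m:ℂ))⁻¹ ^ k := by
        rw [hgform k, hs]
        field_simp
        ring
      calc lam * (s * b k) - s * Tseq μ m b k = s * (lam * b k - Tseq μ m b k) := by ring
        _ = s * g k := by rw [h]
        _ = _ := hsg

end
end
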